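/- Let g be a finite-dimensional complex vector space with conjugation coming from a real form, and let D ⊆ g ⊕ g* be a maximal isotropic subspace of the form L(E,ε) for a subspace E ⊆ g and skew form ε ∈ Λ²E*. Then D ∩ D̄ = 0 if and only if E + Ē = g and for every X ∈ E ∩ Ē, the condition ε(X,Y) = conj(ε(X̄,Ȳ)) for all Y ∈ E ∩ Ē implies X = 0. -/

import Mathlib

open Module

/-- The natural complex-bilinear pairing `⟨A+ξ, B+η⟩ = η(A) + ξ(B)` on `V ⊕ V*`. -/
def pairC {V : Type*} [AddCommGroup V] [Module ℂ V]
    (e f : V × Module.Dual ℂ V) : ℂ :=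
  f.2 e.1 + e.2 f.1

/-- let `g` be a finite-dimensional complex vector space with a
conjugation `σ` coming from a real form, extended componentwise to `g ⊕ g*`.
Let `D = L(E,ε)` be maximal isotropic, for a subspace `E ⊆ g` and skew form
`ε`.  Then `D ∩ D̄ = 0` iff `E + Ē = g` and for every `X ∈ E ∩ Ē`,
`(∀ Y ∈ E ∩ Ē, ε(X,Y) = conj (ε(X̄,Ȳ)))` implies `X = 0`. -/
theorem stmt9 (g : Type*) [AddCommGroup g] [Module ℂ g] [FiniteDimensional ℂ g]
    (σ : g → g)
    (hσadd : ∀ x y, σ (x + y) = σ x + σ y)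
    (hσsmul : ∀ (c : ℂ) (x : g), σ (c • x) = (starRingEnd ℂ c) • σ x)
    (hσinv : ∀ x, σ (σ x) = x)
    (σP : g × Module.Dual ℂ g → g × Module.Dual ℂ g)
    (hσP : ∀ (x : g) (ξ : Module.Dual ℂ g),
      (σP (x, ξ)).1 = σ x ∧ ∀ v : g, (σP (x, ξ)).2 v = starRingEnd ℂ (ξ (σ v)))
    (E : Submodule ℂ g)
    (Ebar : Submodule ℂ g) (hEbar : (Ebar : Set g) = σ '' (E : Set g))
    (ε : g →ₗ[ℂ] g →ₗ[ℂ] ℂ) (hskew : ∀ x y : g, ε x y = - ε y x)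
    (D : Submodule ℂ (g × Module.Dual ℂ g))
    (hD : (D : Set (g × Module.Dual ℂ g)) = {e | e.1 ∈ E ∧ ∀ y ∈ E, e.2 y = ε e.1 y})
    (hiso : ∀ a ∈ D, ∀ b ∈ D, pairC a b = 0)
    (hdim : Module.finrank ℂ D = Module.finrank ℂ g)
    (Dbar : Submodule ℂ (g × Module.Dual ℂ g))
    (hDbar : (Dbar : Set (g × Module.Dual ℂ g)) = σP '' (D : Set (g × Module.Dual ℂ g))) :
    D ⊓ Dbar = ⊥ ↔
      (E ⊔ Ebar = ⊤ ∧
       ∀ X ∈ E ⊓ Ebar,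
         (∀ Y ∈ E ⊓ Ebar, ε X Y = starRingEnd ℂ (ε (σ X) (σ Y))) → X = 0) := by
  have hσ0 : σ 0 = 0 := by
    have h := hσadd 0 0
    rw [add_zero] at h
    exact (left_eq_add.mp h)
  have hmemEbar : ∀ z : g, z ∈ Ebar ↔ σ z ∈ E := by
    intro z
    constructor
    · intro hz
      have : z ∈ σ '' (E : Set g) := by rw [← hEbar]; exact hz
      obtain ⟨e, he, rfl⟩ := this
      rw [hσinv]; exact he
    · intro hz
      have : z ∈ σ '' (E : Set g) := ⟨σ z, hz, hσinv z⟩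
      rw [← hEbar] at this; exact this
  have hσPinv : ∀ p : g × Module.Dual ℂ g, σP (σP p) = p := by
    rintro ⟨x, ξ⟩
    obtain ⟨h1, h2⟩ := hσP x ξ
    obtain ⟨h1', h2'⟩ := hσP (σP (x, ξ)).1 (σP (x, ξ)).2
    have hpair : ((σP (x, ξ)).1, (σP (x, ξ)).2) = σP (x, ξ) := rfl
    rw [hpair] at h1' h2'
    refine Prod.ext ?_ ?_
    · rw [h1', h1, hσinv]
    · apply LinearMap.ext
      intro v
      rw [h2' v, h2 (σ v), hσinv]
      exact Complex.conj_conj _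
  have hmemD : ∀ p : g × Module.Dual ℂ g,
      p ∈ D ↔ (p.1 ∈ E ∧ ∀ y ∈ E, p.2 y = ε p.1 y) := by
    intro p
    rw [← SetLike.mem_coe, hD]
    rfl
  have hmemDbar : ∀ p : g × Module.Dual ℂ g, p ∈ Dbar ↔ σP p ∈ D := by
    intro p
    rw [← SetLike.mem_coe, hDbar]
    constructor
    · rintro ⟨q, hq, rfl⟩
      rw [hσPinv]; exact hq
    · intro h
      exact ⟨σP p, h, hσPinv p⟩
  constructor
  · intro h0
    have htop : E ⊔ Ebar = ⊤ := by
      by_contra hne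
      obtain ⟨x, hx⟩ : ∃ x, x ∉ E ⊔ Ebar := by
        by_contra hall
        push_neg at hall
        exact hne (Submodule.eq_top_iff'.mpr hall)
      set p : Submodule ℂ g := E ⊔ Ebar with hp
      have hq : (Submodule.Quotient.mk x : g ⧸ p) ≠ 0 := by
        rwa [Ne, Submodule.Quotient.mk_eq_zero]
      obtain ⟨f, hf⟩ : ∃ f : Module.Dual ℂ (g ⧸ p), f (Submodule.Quotient.mk x) ≠ 0 := by
        by_contra hall
        push_neg at hall
        exact hq ((Module.forall_dual_apply_eq_zero_iff ℂ _).mp hall)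
      set ξ : Module.Dual ℂ g := f ∘ₗ p.mkQ with hxi
      have hξp : ∀ v ∈ p, ξ v = 0 := by
        intro v hv
        have : p.mkQ v = 0 := by
          rw [Submodule.mkQ_apply, Submodule.Quotient.mk_eq_zero]; exact hv
        simp [hxi, this]
      have hmem1 : ((0 : g), ξ) ∈ D := by
        rw [hmemD]
        refine ⟨zero_mem E, fun y hy => ?_⟩
        have : ξ y = 0 := hξp y (le_sup_left (b := Ebar) hy)
        simp [this]
      have hmem2 : ((0 : g), ξ) ∈ Dbar := by
        rw [hmemDbar, hmemD]
        obtain ⟨h1, h2⟩ := hσP 0 ξ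
        constructor
        · rw [h1, hσ0]; exact zero_mem E
        · intro y hy
          have hσy : σ y ∈ Ebar := (hmemEbar (σ y)).mpr (by rwa [hσinv])
          have : ξ (σ y) = 0 := hξp (σ y) (le_sup_right (a := E) hσy)
          rw [h2 y, this, h1, hσ0]
          simp
      have hzero : ((0 : g), ξ) = 0 := by
        rw [← Submodule.mem_bot ℂ, ← h0]
        exact Submodule.mem_inf.mpr ⟨hmem1, hmem2⟩
      have : ξ = 0 := congrArg Prod.snd hzero
      apply hf
      have := congrFun (congrArg (fun (φ : Module.Dual ℂ g) => (φ : g → ℂ)) this) x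
      simpa [hxi] using this
    refine ⟨htop, ?_⟩
    intro X hX hcond
    obtain ⟨hXE, hXEbar⟩ := Submodule.mem_inf.mp hX
    -- Build the functional ξ on g = E ⊔ Ebar.
    set f₁ : E →ₗ[ℂ] ℂ := (ε X).comp E.subtype with hf₁
    set f₂ : Ebar →ₗ[ℂ] ℂ :=
      { toFun := fun z => starRingEnd ℂ (ε (σ X) (σ (z : g)))
        map_add' := by
          intro a b
          simp [hσadd]
        map_smul' := by
          intro c a
          simp [hσsmul, mul_comm] } with hf₂
    have H : ∀ (x : E) (y : Ebar), (x : g) = (y : g) → f₁ x = f₂ y := by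
      rintro ⟨a, ha⟩ ⟨b, hb⟩ h
      simp only at h
      subst h
      have hab : a ∈ E ⊓ Ebar := Submodule.mem_inf.mpr ⟨ha, hb⟩
      have := hcond a hab
      simpa [hf₁, hf₂] using this
    set F₁ : g →ₗ.[ℂ] ℂ := ⟨E, f₁⟩ with hF₁
    set F₂ : g →ₗ.[ℂ] ℂ := ⟨Ebar, f₂⟩ with hF₂
    set F : g →ₗ.[ℂ] ℂ := F₁.sup F₂ H with hF
    have hdomF : F.domain = E ⊔ Ebar := rfl
    have hmemtop : ∀ v : g, v ∈ F.domain := by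
      intro v
      rw [hdomF, htop]
      exact Submodule.mem_top
    set ξ : Module.Dual ℂ g :=
      F.toFun.comp (LinearMap.codRestrict F.domain LinearMap.id hmemtop) with hxi
    have hξval : ∀ v : g, ξ v = F ⟨v, hmemtop v⟩ := fun v => rfl
    have hξE : ∀ v ∈ E, ξ v = ε X v := by
      intro v hv
      rw [hξval]
      have := LinearPMap.sup_apply H ⟨v, hv⟩ 0 ⟨v, hmemtop v⟩ (by simp)
      rw [show F ⟨v, hmemtop v⟩ = _ from this]
      rw [LinearPMap.map_zero]
      show f₁ ⟨v, hv⟩ + 0 = _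
      simp [hf₁]
    have hξEbar : ∀ v ∈ Ebar, ξ v = starRingEnd ℂ (ε (σ X) (σ v)) := by
      intro v hv
      rw [hξval]
      have := LinearPMap.sup_apply H 0 ⟨v, hv⟩ ⟨v, hmemtop v⟩ (by simp)
      rw [show F ⟨v, hmemtop v⟩ = _ from this]
      rw [LinearPMap.map_zero]
      show 0 + f₂ ⟨v, hv⟩ = _
      simp [hf₂]
    have hmem1 : (X, ξ) ∈ D := by
      rw [hmemD]
      exact ⟨hXE, fun y hy => hξE y hy⟩
    have hmem2 : (X, ξ) ∈ Dbar := by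
      rw [hmemDbar, hmemD]
      obtain ⟨h1, h2⟩ := hσP X ξ
      constructor
      · rw [h1]
        exact (hmemEbar X).mp hXEbar
      · intro y hy
        have hσy : σ y ∈ Ebar := (hmemEbar (σ y)).mpr (by rwa [hσinv])
        rw [h2 y, hξEbar (σ y) hσy, hσinv, h1]
        simp
    have hzero : (X, ξ) = 0 := by
      rw [← Submodule.mem_bot ℂ, ← h0]
      exact Submodule.mem_inf.mpr ⟨hmem1, hmem2⟩
    exact congrArg Prod.fst hzero
  · rintro ⟨htop, hcond⟩
    rw [eq_bot_iff]
    rintro ⟨X, ξ⟩ hmem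
    obtain ⟨hmD, hmDbar⟩ := Submodule.mem_inf.mp hmem
    obtain ⟨hXE, hξE⟩ := (hmemD _).mp hmD
    have h2 := (hmemD _).mp ((hmemDbar _).mp hmDbar)
    obtain ⟨hσ1, hσ2⟩ := hσP X ξ
    rw [hσ1] at h2
    obtain ⟨hσXE, hσξ⟩ := h2
    have hconjξ : ∀ y ∈ E, starRingEnd ℂ (ξ (σ y)) = ε (σ X) y := by
      intro y hy
      have := hσξ y hy
      rwa [hσ2 y] at this
    have hXEbar : X ∈ Ebar := (hmemEbar X).mpr hσXE
    have hX0 : X = 0 := by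
      apply hcond X (Submodule.mem_inf.mpr ⟨hXE, hXEbar⟩)
      intro Y hY
      obtain ⟨hYE, hYEbar⟩ := Submodule.mem_inf.mp hY
      have h3 := hconjξ (σ Y) ((hmemEbar Y).mp hYEbar)
      rw [hσinv] at h3
      have h4 : ξ Y = starRingEnd ℂ (ε (σ X) (σ Y)) := by
        rw [← h3]
        simp
      rw [← hξE Y hYE, h4]
    subst hX0
    have hξ0 : ξ = 0 := by
      apply LinearMap.ext
      intro v
      have hv : v ∈ E ⊔ Ebar := by rw [htop]; exact Submodule.mem_top
      obtain ⟨a, ha, b, hb, rfl⟩ := Submodule.mem_sup.mp hv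
      have hξa : ξ a = 0 := by
        rw [hξE a ha]
        simp
      have hξb : ξ b = 0 := by
        have := hconjξ (σ b) ((hmemEbar b).mp hb)
        rw [hσinv, hσ0] at this
        simp only [map_zero, LinearMap.zero_apply] at this
        have := congrArg (starRingEnd ℂ) this
        simpa using this
      simp [hξa, hξb]
    rw [hξ0]
    rfl
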